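/- Let ℓ, m be positive integers, let ε > 0, and let v, ṽ : Fin m → ℝ^ℓ be families of points with ‖v(i) − ṽ(i)‖ < ε for every i. If x ∈ ℝ^ℓ is such that the closed ball of radius ε centered at x is contained in the convex hull of {v(1), …, v(m)}, then x lies in the convex hull of {ṽ(1), …, ṽ(m)}. -/

import Mathlib

private abbrev Eℓ (ℓ : ℕ) := EuclideanSpace ℝ (Fin ℓ)

/-- **Lemma 8 (convex_analysis).** Let `ε > 0` and let `v i`, `ṽ i` (`i ∈ Fin m`) be points
of `ℝ^ℓ` with `‖v i - ṽ i‖ < ε` for every `i`. If the closed ball of radius `ε` around `x`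
is contained in the convex hull of the `v i`, then `x` lies in the convex hull of the `ṽ i`. -/
theorem mem_convexHull_of_perturbed_vertices (ℓ m : ℕ) (hℓ : 0 < ℓ) (hm : 0 < m)
    (ε : ℝ) (hε : 0 < ε)
    (v vt : Fin m → EuclideanSpace ℝ (Fin ℓ))
    (hperturb : ∀ i, ‖v i - vt i‖ < ε)
    (x : EuclideanSpace ℝ (Fin ℓ))
    (hx : Metric.closedBall x ε ⊆ convexHull ℝ (Set.range v)) :
    x ∈ convexHull ℝ (Set.range vt) := by
  by_contra hxs
  have hclosed : IsClosed (convexHull ℝ (Set.range vt)) :=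
    (Set.Finite.isCompact_convexHull ℝ (Set.finite_range vt)).isClosed
  obtain ⟨f, c, hfc, hcx⟩ :=
    geometric_hahn_banach_closed_point (convex_convexHull ℝ _) hclosed hxs
  have hvt : ∀ i, f (vt i) < c := fun i =>
    hfc _ (subset_convexHull ℝ _ ⟨i, rfl⟩)
  have hf0 : f ≠ 0 := by
    intro h
    have h1 := hvt ⟨0, hm⟩
    have h2 := hcx
    simp [h] at h1 h2
    linarith
  have hfn : 0 < ‖f‖ := norm_pos_iff.mpr hf0
  set z : Eℓ ℓ := (InnerProductSpace.toDual ℝ (Eℓ ℓ)).symm f with hz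
  have hzf : ∀ y : Eℓ ℓ, inner ℝ z y = f y := fun y =>
    InnerProductSpace.toDual_symm_apply (E := Eℓ ℓ)
  have hzn : ‖z‖ = ‖f‖ := by
    rw [hz]
    exact LinearIsometryEquiv.norm_map _ f
  have hzpos : 0 < ‖z‖ := hzn ▸ hfn
  set u : Eℓ ℓ := (ε / ‖z‖) • z with hu
  have hun : ‖u‖ = ε := by
    rw [hu, norm_smul, Real.norm_eq_abs, abs_of_pos (div_pos hε hzpos),
      div_mul_cancel₀ _ (ne_of_gt hzpos)]
  have hfu : f u = ε * ‖z‖ := by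
    rw [← hzf u, hu, inner_smul_right, real_inner_self_eq_norm_sq]
    field_simp
  have hp : x + u ∈ Metric.closedBall x ε := by
    simp [Metric.mem_closedBall, dist_eq_norm, hun]
  have hpc : x + u ∈ convexHull ℝ (Set.range v) := hx hp
  have hhalf : convexHull ℝ (Set.range v) ⊆ {y : Eℓ ℓ | f y < c + ε * ‖z‖} := by
    apply convexHull_min
    · rintro _ ⟨i, rfl⟩
      have h1 : f (v i) = f (vt i) + f (v i - vt i) := by
        rw [← map_add]; congr 1; abel
      have h2 : f (v i - vt i) ≤ ‖f‖ * ‖v i - vt i‖ :=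
        le_trans (le_abs_self _) (f.le_opNorm _)
      have h3 : ‖f‖ * ‖v i - vt i‖ < ‖f‖ * ε :=
        mul_lt_mul_of_pos_left (hperturb i) hfn
      have := hvt i
      simp only [Set.mem_setOf_eq]
      rw [hzn]
      linarith [h1, h2, h3, this]
    · exact convex_halfSpace_lt (LinearMap.isLinear (f.toLinearMap)) _
  have hlt : f (x + u) < c + ε * ‖z‖ := hhalf hpc
  rw [map_add, hfu] at hlt
  linarith
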